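/- Let L ≥ 2 be an integer and p ∈ [0,1] a real number. For an integer r with 0 ≤ r ≤ L define κ(r) = ∑_{j=1}^{L−r} (j/(j+r)) · binom(L−r, j) · p^{j} (1−p)^{L−r−j} (so κ(L) = 0). Then κ is discretely convex: for every integer r with 1 ≤ r ≤ L−1, κ(r−1) + κ(r+1) ≥ 2·κ(r). -/

import Mathlib

open Finset

/-- extend a sum over `Icc 1 n` to `range (n+1)` when the 0-term vanishes -/
lemma icc_to_range (n : ℕ) (f : ℕ → ℝ) (h0 : f 0 = 0) :
    ∑ j ∈ Finset.Icc 1 n, f j = ∑ j ∈ Finset.range (n+1), f j := by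
  apply Finset.sum_subset
  · intro x hx
    simp only [Finset.mem_Icc] at hx
    simp only [Finset.mem_range]
    omega
  · intro x hx hx2
    simp only [Finset.mem_Icc] at hx2
    simp only [Finset.mem_range] at hx
    have : x = 0 := by omega
    rw [this, h0]

/-- one-step binomial coupling identity -/
lemma step (p q : ℝ) (g : ℕ → ℝ) (m : ℕ) :
    ∑ j ∈ Finset.range (m+2), g j * ((m+1).choose j : ℝ) * p^j * q^(m+1-j)
      = ∑ z ∈ Finset.range (m+1), (p * g (z+1) + q * g z) * (m.choose z : ℝ) * p^z * q^(m-z) := by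
  have hA : ∑ j ∈ Finset.range (m+2), g j * ((m+1).choose j : ℝ) * p^j * q^(m+1-j)
      = (∑ i ∈ Finset.range (m+1), g (i+1) * (m.choose i : ℝ) * p^(i+1) * q^(m-i))
        + ((∑ i ∈ Finset.range (m+1), g (i+1) * (m.choose (i+1) : ℝ) * p^(i+1) * q^(m-i))
           + g 0 * q^(m+1)) := by
    conv_lhs => rw [Finset.sum_range_succ']
    have h1 : ∀ i ∈ Finset.range (m+1),
        g (i+1) * ((m+1).choose (i+1) : ℝ) * p^(i+1) * q^(m+1-(i+1))
        = g (i+1) * (m.choose i : ℝ) * p^(i+1) * q^(m-i)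
          + g (i+1) * (m.choose (i+1) : ℝ) * p^(i+1) * q^(m-i) := by
      intro i hi
      rw [Nat.choose_succ_succ, Nat.succ_sub_succ]
      push_cast
      ring
    rw [Finset.sum_congr rfl h1, Finset.sum_add_distrib]
    simp only [Nat.choose_zero_right, Nat.cast_one, mul_one, pow_zero, Nat.sub_zero, one_mul,
      mul_one]
    ring
  have hB : (∑ i ∈ Finset.range (m+1), g (i+1) * (m.choose (i+1) : ℝ) * p^(i+1) * q^(m-i))
        + g 0 * q^(m+1)
      = ∑ j ∈ Finset.range (m+1), g j * (m.choose j : ℝ) * p^j * q^(m+1-j) := by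
    have h2 : ∑ j ∈ Finset.range (m+2), g j * (m.choose j : ℝ) * p^j * q^(m+1-j)
        = (∑ i ∈ Finset.range (m+1), g (i+1) * (m.choose (i+1) : ℝ) * p^(i+1) * q^(m+1-(i+1)))
          + g 0 * (m.choose 0 : ℝ) * p^0 * q^(m+1-0) := Finset.sum_range_succ' _ _
    rw [Finset.sum_range_succ, Nat.choose_succ_self] at h2
    simp only [Nat.cast_zero, mul_zero, zero_mul, add_zero, Nat.choose_zero_right, Nat.cast_one,
      mul_one, pow_zero, Nat.sub_zero, one_mul, Nat.succ_sub_succ] at h2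
    linarith [h2]
  rw [hA, hB]
  have hC : ∀ j ∈ Finset.range (m+1),
      g j * (m.choose j : ℝ) * p^j * q^(m+1-j)
      = q * (g j * (m.choose j : ℝ) * p^j * q^(m-j)) := by
    intro j hj
    simp only [Finset.mem_range] at hj
    have : m + 1 - j = (m - j) + 1 := by omega
    rw [this, pow_succ]
    ring
  rw [Finset.sum_congr rfl hC, ← Finset.sum_add_distrib]
  apply Finset.sum_congr rfl
  intro z hz
  ring

/-- per-term convexity inequality -/
lemma key (p x s : ℝ) (hp0 : 0 ≤ p) (hp1 : p ≤ 1) (hx : 0 ≤ x) (hs : 1 ≤ s) :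
    2 * (p * ((x+1)/(x+1+s)) + (1-p) * (x/(x+s)))
      ≤ p^2 * ((x+2)/(x+1+s)) + 2*(p*(1-p)) * ((x+1)/(x+s))
        + (1-p)^2 * (x/(x+s-1)) + x/(x+1+s) := by
  have h2 : (0:ℝ) < x + s := by linarith
  have h3 : (0:ℝ) < x + 1 + s := by linarith
  rcases eq_or_lt_of_le (by linarith : (0:ℝ) ≤ x + s - 1) with h1 | h1
  · have hx0 : x = 0 := by linarith
    have hs1 : s = 1 := by linarith
    rw [hx0, hs1]
    norm_num
    nlinarith [mul_nonneg hp0 (by linarith : (0:ℝ) ≤ 1 - p)]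
  · have hne1 : x + s - 1 ≠ 0 := ne_of_gt h1
    have keq : p^2 * ((x+2)/(x+1+s)) + 2*(p*(1-p)) * ((x+1)/(x+s))
        + (1-p)^2 * (x/(x+s-1)) + x/(x+1+s)
        - 2 * (p * ((x+1)/(x+1+s)) + (1-p) * (x/(x+s)))
        = 2*(1-p)*(x+(s-1)*p) / ((x+s-1)*(x+s)*(x+1+s)) := by
      field_simp
      ring
    have hnum : (0:ℝ) ≤ 2*(1-p)*(x+(s-1)*p) := by
      have h4 := mul_nonneg (by linarith : (0:ℝ) ≤ s - 1) hp0
      nlinarith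
    have hpos : (0:ℝ) < (x+s-1)*(x+s)*(x+1+s) := by positivity
    have h5 := div_nonneg hnum (le_of_lt hpos)
    linarith [keq ▸ h5]

theorem stmt_12 (L : ℕ) (hL : 2 ≤ L) (p : ℝ) (hp0 : 0 ≤ p) (hp1 : p ≤ 1)
    (κ : ℕ → ℝ)
    (hκ : ∀ r : ℕ, r ≤ L → κ r = ∑ j ∈ Finset.Icc 1 (L - r),
      (j : ℝ) / ((j : ℝ) + (r : ℝ)) * ((L - r).choose j : ℝ) *
        p ^ j * (1 - p) ^ (L - r - j))
    (r : ℕ) (hr1 : 1 ≤ r) (hr2 : r ≤ L - 1) :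
    2 * κ r ≤ κ (r - 1) + κ (r + 1) := by
  obtain ⟨m, hm⟩ : ∃ m, L = m + 1 + r := ⟨L - r - 1, by omega⟩
  set q : ℝ := 1 - p with hq
  have hq0 : 0 ≤ q := by rw [hq]; linarith
  have er1 : L - (r+1) = m := by omega
  have er : L - r = m + 1 := by omega
  have er0 : L - (r-1) = m + 2 := by omega
  have e1 : κ (r+1) = ∑ z ∈ Finset.range (m+1),
      (z:ℝ)/((z:ℝ) + ((r+1:ℕ):ℝ)) * (m.choose z : ℝ) * p^z * q^(m-z) := by
    rw [hκ (r+1) (by omega), er1]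
    exact icc_to_range m
      (fun j => (j:ℝ)/((j:ℝ) + ((r+1:ℕ):ℝ)) * (m.choose j : ℝ) * p^j * q^(m-j))
      (by norm_num)
  have e2 : κ r = ∑ z ∈ Finset.range (m+1),
      (p * (((z+1:ℕ):ℝ)/(((z+1:ℕ):ℝ) + (r:ℝ))) + q * ((z:ℝ)/((z:ℝ) + (r:ℝ))))
        * (m.choose z : ℝ) * p^z * q^(m-z) := by
    rw [hκ r (by omega), er]
    refine Eq.trans (icc_to_range (m+1)
      (fun j => (j:ℝ)/((j:ℝ) + (r:ℝ)) * ((m+1).choose j : ℝ) * p^j * q^(m+1-j))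
      (by norm_num)) ?_
    exact step p q (fun j => (j:ℝ)/((j:ℝ) + (r:ℝ))) m
  have e3 : κ (r-1) = ∑ z ∈ Finset.range (m+1),
      (p * (p * (((z+2:ℕ):ℝ)/(((z+2:ℕ):ℝ) + ((r-1:ℕ):ℝ)))
              + q * (((z+1:ℕ):ℝ)/(((z+1:ℕ):ℝ) + ((r-1:ℕ):ℝ))))
        + q * (p * (((z+1:ℕ):ℝ)/(((z+1:ℕ):ℝ) + ((r-1:ℕ):ℝ)))
              + q * ((z:ℝ)/((z:ℝ) + ((r-1:ℕ):ℝ)))))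
        * (m.choose z : ℝ) * p^z * q^(m-z) := by
    rw [hκ (r-1) (by omega), er0]
    refine Eq.trans (icc_to_range (m+2)
      (fun j => (j:ℝ)/((j:ℝ) + ((r-1:ℕ):ℝ)) * ((m+2).choose j : ℝ) * p^j * q^(m+2-j))
      (by norm_num)) ?_
    refine Eq.trans (step p q (fun j => (j:ℝ)/((j:ℝ) + ((r-1:ℕ):ℝ))) (m+1)) ?_
    exact step p q
      (fun z => p * (((z+1:ℕ):ℝ)/(((z+1:ℕ):ℝ) + ((r-1:ℕ):ℝ)))
        + q * ((z:ℝ)/((z:ℝ) + ((r-1:ℕ):ℝ)))) m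
  rw [e1, e2, e3, ← Finset.sum_add_distrib, Finset.mul_sum]
  apply Finset.sum_le_sum
  intro z hz
  have hW : (0:ℝ) ≤ (m.choose z : ℝ) * p^z * q^(m-z) := by positivity
  have hkey := key p (z:ℝ) (r:ℝ) hp0 hp1 (by positivity) (by exact_mod_cast hr1)
  have hterm : 2 * (p * (((z+1:ℕ):ℝ)/(((z+1:ℕ):ℝ) + (r:ℝ))) + q * ((z:ℝ)/((z:ℝ) + (r:ℝ))))
      ≤ (p * (p * (((z+2:ℕ):ℝ)/(((z+2:ℕ):ℝ) + ((r-1:ℕ):ℝ)))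
              + q * (((z+1:ℕ):ℝ)/(((z+1:ℕ):ℝ) + ((r-1:ℕ):ℝ))))
        + q * (p * (((z+1:ℕ):ℝ)/(((z+1:ℕ):ℝ) + ((r-1:ℕ):ℝ)))
              + q * ((z:ℝ)/((z:ℝ) + ((r-1:ℕ):ℝ)))))
        + (z:ℝ)/((z:ℝ) + ((r+1:ℕ):ℝ)) := by
    rw [hq]
    simp only [Nat.cast_sub hr1, Nat.cast_add, Nat.cast_one, Nat.cast_ofNat]
    have e4 : ((z:ℝ)+2) + ((r:ℝ)-1) = (z:ℝ)+1+(r:ℝ) := by ring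
    have e5 : ((z:ℝ)+1) + ((r:ℝ)-1) = (z:ℝ)+(r:ℝ) := by ring
    have e7 : (z:ℝ) + ((r:ℝ)-1) = (z:ℝ)+(r:ℝ)-1 := by ring
    have e8 : (z:ℝ) + ((r:ℝ)+1) = (z:ℝ)+1+(r:ℝ) := by ring
    rw [e4, e5, e7, e8]
    nlinarith [hkey]
  calc 2 * ((p * (((z+1:ℕ):ℝ)/(((z+1:ℕ):ℝ) + (r:ℝ))) + q * ((z:ℝ)/((z:ℝ) + (r:ℝ))))
        * (m.choose z : ℝ) * p^z * q^(m-z))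
      = (2 * (p * (((z+1:ℕ):ℝ)/(((z+1:ℕ):ℝ) + (r:ℝ))) + q * ((z:ℝ)/((z:ℝ) + (r:ℝ)))))
        * ((m.choose z : ℝ) * p^z * q^(m-z)) := by ring
    _ ≤ ((p * (p * (((z+2:ℕ):ℝ)/(((z+2:ℕ):ℝ) + ((r-1:ℕ):ℝ)))
              + q * (((z+1:ℕ):ℝ)/(((z+1:ℕ):ℝ) + ((r-1:ℕ):ℝ))))
        + q * (p * (((z+1:ℕ):ℝ)/(((z+1:ℕ):ℝ) + ((r-1:ℕ):ℝ)))
              + q * ((z:ℝ)/((z:ℝ) + ((r-1:ℕ):ℝ)))))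
        + (z:ℝ)/((z:ℝ) + ((r+1:ℕ):ℝ))) * ((m.choose z : ℝ) * p^z * q^(m-z)) :=
        mul_le_mul_of_nonneg_right hterm hW
    _ = (p * (p * (((z+2:ℕ):ℝ)/(((z+2:ℕ):ℝ) + ((r-1:ℕ):ℝ)))
              + q * (((z+1:ℕ):ℝ)/(((z+1:ℕ):ℝ) + ((r-1:ℕ):ℝ))))
        + q * (p * (((z+1:ℕ):ℝ)/(((z+1:ℕ):ℝ) + ((r-1:ℕ):ℝ)))
              + q * ((z:ℝ)/((z:ℝ) + ((r-1:ℕ):ℝ)))))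
        * (m.choose z : ℝ) * p^z * q^(m-z)
        + (z:ℝ)/((z:ℝ) + ((r+1:ℕ):ℝ)) * (m.choose z : ℝ) * p^z * q^(m-z) := by ring
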